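/- Lower bound for homogeneous slices in the box example: let X = [−1,1]², fix z ∈ [−1,1]² and the line L = {λz : λ ∈ R}. Let A ~ Uniform(1, 1+ρ) and B ~ Uniform(−1,1) be independent, and set c = (−A, B). Then E[min_{x ∈ X∩L} cᵀx − min_{x∈X} cᵀx] ≥ 1/2. -/

import Mathlib

open MeasureTheory
set_option maxHeartbeats 1000000 in

theorem stmt_15 (ρ : ℝ) (hρ : 0 < ρ) (z : ℝ × ℝ)
    (hz : z ∈ Set.Icc ((-1 : ℝ), (-1 : ℝ)) (1, 1))
    (X : Set (ℝ × ℝ)) (hX : X = Set.Icc ((-1 : ℝ), (-1 : ℝ)) (1, 1))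
    (L : Set (ℝ × ℝ)) (hL : L = {x : ℝ × ℝ | ∃ l : ℝ, x = l • z}) :
    (1 / (2 * ρ)) *
        ∫ a in Set.Ioo (1 : ℝ) (1 + ρ), ∫ b in Set.Ioo (-1 : ℝ) 1,
          (sInf ((fun x : ℝ × ℝ => -a * x.1 + b * x.2) '' (X ∩ L)) -
            sInf ((fun x : ℝ × ℝ => -a * x.1 + b * x.2) '' X))
      ≥ 1 / 2 := by
  obtain ⟨hzl, hzr⟩ := hz
  have hz1l : (-1 : ℝ) ≤ z.1 := hzl.1
  have hz2l : (-1 : ℝ) ≤ z.2 := hzl.2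
  have hz1r : z.1 ≤ 1 := hzr.1
  have hz2r : z.2 ≤ 1 := hzr.2
  set m : ℝ := max |z.1| |z.2| with hmdef
  have hz1m : |z.1| ≤ m := le_max_left _ _
  have hz2m : |z.2| ≤ m := le_max_right _ _
  have hm0 : 0 ≤ m := le_trans (abs_nonneg _) hz1m
  have hm1 : m ≤ 1 := max_le (abs_le.mpr ⟨hz1l, hz1r⟩) (abs_le.mpr ⟨hz2l, hz2r⟩)
  -- sInf over the box
  have key1 : ∀ a b : ℝ,
      sInf ((fun x : ℝ × ℝ => -a * x.1 + b * x.2) '' X) = -|a| - |b| := by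
    intro a b
    have hlow : ∀ y ∈ (fun x : ℝ × ℝ => -a * x.1 + b * x.2) '' X, -|a| - |b| ≤ y := by
      rintro y ⟨x, hxX, rfl⟩
      rw [hX] at hxX
      obtain ⟨⟨h1l, h2l⟩, ⟨h1r, h2r⟩⟩ := hxX
      have hx1 : |x.1| ≤ 1 := abs_le.mpr ⟨h1l, h1r⟩
      have hx2 : |x.2| ≤ 1 := abs_le.mpr ⟨h2l, h2r⟩
      have e1 : -(a * x.1) ≥ -|a| := by
        have h : |a * x.1| ≤ |a| := by
          rw [abs_mul]
          nlinarith [abs_nonneg a, abs_nonneg x.1]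
        have := le_abs_self (a * x.1)
        linarith
      have e2 : b * x.2 ≥ -|b| := by
        have : |b * x.2| ≤ |b| := by
          rw [abs_mul]
          nlinarith [abs_nonneg b, abs_nonneg x.2]
        have := neg_abs_le (b * x.2)
        linarith
      show -|a| - |b| ≤ -a * x.1 + b * x.2
      have : -a * x.1 = -(a * x.1) := by ring
      rw [this]
      linarith
    have hmem : -|a| - |b| ∈ (fun x : ℝ × ℝ => -a * x.1 + b * x.2) '' X := by
      refine ⟨((if 0 ≤ a then (1 : ℝ) else -1), (if 0 ≤ b then (-1 : ℝ) else 1)), ?_, ?_⟩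
      · rw [hX]
        constructor <;> constructor <;> dsimp <;> split_ifs <;> norm_num
      · dsimp only
        rcases le_or_gt 0 a with ha | ha <;> rcases le_or_gt 0 b with hb | hb
        · rw [if_pos ha, if_pos hb, abs_of_nonneg ha, abs_of_nonneg hb]; ring
        · rw [if_pos ha, if_neg (not_le.mpr hb), abs_of_nonneg ha, abs_of_neg hb]; ring
        · rw [if_neg (not_le.mpr ha), if_pos hb, abs_of_neg ha, abs_of_nonneg hb]; ring
        · rw [if_neg (not_le.mpr ha), if_neg (not_le.mpr hb), abs_of_neg ha,
            abs_of_neg hb]; ring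
    exact le_antisymm (csInf_le ⟨-|a| - |b|, hlow⟩ hmem) (le_csInf ⟨_, hmem⟩ hlow)
  -- sInf over the slice
  have key2 : ∀ a b : ℝ,
      sInf ((fun x : ℝ × ℝ => -a * x.1 + b * x.2) '' (X ∩ L)) =
        -(|(-a) * z.1 + b * z.2| / m) := by
    intro a b
    set t : ℝ := (-a) * z.1 + b * z.2 with htdef
    by_cases hm : m = 0
    · have h1 : z.1 = 0 := abs_eq_zero.mp (le_antisymm (hm ▸ hz1m) (abs_nonneg _))
      have h2 : z.2 = 0 := abs_eq_zero.mp (le_antisymm (hm ▸ hz2m) (abs_nonneg _))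
      have hXL : X ∩ L = {((0 : ℝ), (0 : ℝ))} := by
        ext x
        constructor
        · rintro ⟨_, hxL⟩
          rw [hL] at hxL
          obtain ⟨l, rfl⟩ := hxL
          simp [Prod.smul_def, h1, h2, Prod.ext_iff]
        · rintro rfl
          refine ⟨?_, ?_⟩
          · rw [hX]; constructor <;> constructor <;> norm_num
          · rw [hL]; exact ⟨0, by simp [Prod.ext_iff]⟩
      rw [hXL]
      simp [htdef, h1, h2, hm]
    · have hmpos : 0 < m := lt_of_le_of_ne hm0 (Ne.symm hm)
      have hlow : ∀ y ∈ (fun x : ℝ × ℝ => -a * x.1 + b * x.2) '' (X ∩ L),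
          -(|t| / m) ≤ y := by
        rintro y ⟨x, ⟨hxX, hxL⟩, rfl⟩
        rw [hL] at hxL
        obtain ⟨l, rfl⟩ := hxL
        rw [hX] at hxX
        obtain ⟨⟨h1l, h2l⟩, ⟨h1r, h2r⟩⟩ := hxX
        simp only [Prod.smul_fst, Prod.smul_snd, smul_eq_mul] at h1l h2l h1r h2r ⊢
        have hlz1 : |l * z.1| ≤ 1 := abs_le.mpr ⟨h1l, h1r⟩
        have hlz2 : |l * z.2| ≤ 1 := abs_le.mpr ⟨h2l, h2r⟩
        have hlm : |l| * m ≤ 1 := by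
          rw [hmdef, mul_max_of_nonneg _ _ (abs_nonneg l), ← abs_mul, ← abs_mul]
          exact max_le hlz1 hlz2
        have hval : -a * (l * z.1) + b * (l * z.2) = l * t := by rw [htdef]; ring
        rw [hval]
        have h1 : -(|l| * |t|) ≤ l * t := by
          rw [← abs_mul]; exact neg_abs_le _
        have h2 : |l| * |t| ≤ |t| / m := by
          rw [le_div_iff₀ hmpos]
          have : |l| ≤ 1 / m := by
            rw [le_div_iff₀ hmpos]; exact hlm
          nlinarith [abs_nonneg t, abs_nonneg l]
        linarith
      have hmem : -(|t| / m) ∈ (fun x : ℝ × ℝ => -a * x.1 + b * x.2) '' (X ∩ L) := by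
        set l0 : ℝ := if 0 ≤ t then -(1 / m) else 1 / m with hl0
        refine ⟨l0 • z, ⟨?_, ?_⟩, ?_⟩
        · rw [hX]
          have hl0abs : |l0| = 1 / m := by
            have h1m : (0:ℝ) ≤ 1 / m := by positivity
            rw [hl0]; split_ifs
            · rw [abs_neg, abs_of_nonneg h1m]
            · rw [abs_of_nonneg h1m]
          have c1 : |l0 * z.1| ≤ 1 := by
            rw [abs_mul, hl0abs, div_mul_eq_mul_div, one_mul, div_le_one hmpos]
            exact hz1m
          have c2 : |l0 * z.2| ≤ 1 := by
            rw [abs_mul, hl0abs, div_mul_eq_mul_div, one_mul, div_le_one hmpos]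
            exact hz2m
          obtain ⟨c1l, c1r⟩ := abs_le.mp c1
          obtain ⟨c2l, c2r⟩ := abs_le.mp c2
          exact ⟨⟨c1l, c2l⟩, ⟨c1r, c2r⟩⟩
        · rw [hL]; exact ⟨l0, rfl⟩
        · simp only [Prod.smul_fst, Prod.smul_snd, smul_eq_mul]
          have hval : -a * (l0 * z.1) + b * (l0 * z.2) = l0 * t := by rw [htdef]; ring
          rw [hval, hl0]
          split_ifs with ht
          · rw [abs_of_nonneg ht]; ring
          · rw [abs_of_neg (not_le.mp ht)]; ring
      exact le_antisymm (csInf_le ⟨-(|t| / m), hlow⟩ hmem) (le_csInf ⟨_, hmem⟩ hlow)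
  -- rewrite the goal
  suffices h : (1 / (2 * ρ)) *
      ∫ a in Set.Ioo (1 : ℝ) (1 + ρ), ∫ b in Set.Ioo (-1 : ℝ) 1,
        (-(|(-a) * z.1 + b * z.2| / m) - (-|a| - |b|)) ≥ 1 / 2 by
    simpa only [key1, key2] using h
  set G : ℝ → ℝ := fun a => ∫ b in Set.Ioo (-1 : ℝ) 1,
    (-(|(-a) * z.1 + b * z.2| / m) - (-|a| - |b|)) with hGdef
  -- pointwise lower bound for the inner integral
  have hinner : ∀ a : ℝ, a ∈ Set.Ioo (1 : ℝ) (1 + ρ) → (1 : ℝ) ≤ G a := by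
    intro a ha
    have ha1 : 1 ≤ a := le_of_lt ha.1
    have haabs : |a| = a := abs_of_nonneg (by linarith)
    set h : ℝ → ℝ := fun b => -(|(-a) * z.1 + b * z.2| / m) - (-|a| - |b|) with hhdef
    have hcont : Continuous h := by
      have c1 : Continuous fun b : ℝ => (-a) * z.1 + b * z.2 :=
        continuous_const.add (continuous_id.mul continuous_const)
      exact ((continuous_abs.comp c1).div_const m).neg.sub
        (continuous_const.sub continuous_abs)
    have hGa : G a = ∫ b in (-1 : ℝ)..1, h b := by
      rw [hGdef, intervalIntegral.integral_of_le (by norm_num : (-1 : ℝ) ≤ 1),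
        integral_Ioc_eq_integral_Ioo]
    have hint : IntervalIntegrable h volume (-1) 1 := hcont.intervalIntegrable _ _
    have hint' : IntervalIntegrable (fun b => h (-b)) volume (-1) 1 :=
      (hcont.comp continuous_neg).intervalIntegrable _ _
    have hsym : (∫ b in (-1 : ℝ)..1, h (-b)) = ∫ b in (-1 : ℝ)..1, h b := by
      simpa using intervalIntegral.integral_comp_neg (a := (-1 : ℝ)) (b := 1) h
    have habsint : IntervalIntegrable (fun b : ℝ => 2 * |b|) volume (-1) 1 :=
      (continuous_const.mul continuous_abs).intervalIntegrable _ _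
    have hpt : ∀ b ∈ Set.Icc (-1 : ℝ) 1, 2 * |b| ≤ h b + h (-b) := by
      intro b hb
      have hb1 : |b| ≤ 1 := abs_le.mpr ⟨hb.1, hb.2⟩
      set p : ℝ := (-a) * z.1 with hp
      set q : ℝ := b * z.2 with hq
      have hval2 : (-a) * z.1 + (-b) * z.2 = p - q := by rw [hp, hq]; ring
      have hval1 : (-a) * z.1 + b * z.2 = p + q := by rw [hp, hq]
      have hpabs : |p| ≤ a * m := by
        rw [hp, abs_mul, abs_neg, haabs]
        nlinarith [abs_nonneg z.1]
      have hqabs : |q| ≤ m := by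
        rw [hq, abs_mul]
        nlinarith [abs_nonneg z.2, abs_nonneg b]
      have hmam : m ≤ a * m := by nlinarith
      have hsumabs : |p + q| + |p - q| ≤ 2 * (a * m) := by
        rcases abs_cases (p + q) with ⟨h1, _⟩ | ⟨h1, _⟩ <;>
          rcases abs_cases (p - q) with ⟨h2, _⟩ | ⟨h2, _⟩ <;>
          rcases abs_cases p with ⟨h3, _⟩ | ⟨h3, _⟩ <;>
          rcases abs_cases q with ⟨h4, _⟩ | ⟨h4, _⟩ <;>
          linarith
      have hdiv : |p + q| / m + |p - q| / m ≤ 2 * a := by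
        by_cases hm : m = 0
        · rw [hm, div_zero, div_zero, add_zero]
          linarith
        · have hmpos : 0 < m := lt_of_le_of_ne hm0 (Ne.symm hm)
          rw [← add_div, div_le_iff₀ hmpos]
          nlinarith
      have hrw : h b + h (-b) =
          2 * |a| + |b| + |(-b)| - (|p + q| / m + |p - q| / m) := by
        rw [hhdef]; dsimp only; rw [hval1, hval2]; ring
      rw [hrw, abs_neg, haabs]
      linarith
    have habs1 : (∫ b in (-1 : ℝ)..1, |b|) = 1 := by
      have e1 : (∫ b in (-1 : ℝ)..0, |b|) = 1 / 2 := by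
        rw [intervalIntegral.integral_congr (g := fun b : ℝ => -b)
          (fun x hx => by
            rw [Set.uIcc_of_le (by norm_num : (-1:ℝ) ≤ 0)] at hx
            exact abs_of_nonpos hx.2)]
        rw [intervalIntegral.integral_neg, integral_id]
        norm_num
      have e2 : (∫ b in (0 : ℝ)..1, |b|) = 1 / 2 := by
        rw [intervalIntegral.integral_congr (g := fun b : ℝ => b)
          (fun x hx => by
            rw [Set.uIcc_of_le (by norm_num : (0:ℝ) ≤ 1)] at hx
            exact abs_of_nonneg hx.1)]
        rw [integral_id]
        norm_num
      rw [← intervalIntegral.integral_add_adjacent_intervals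
        (continuous_abs.intervalIntegrable (-1) 0)
        (continuous_abs.intervalIntegrable 0 1), e1, e2]
      norm_num
    have hmono : (∫ b in (-1 : ℝ)..1, 2 * |b|) ≤ ∫ b in (-1 : ℝ)..1, (h b + h (-b)) :=
      intervalIntegral.integral_mono_on (by norm_num) habsint (hint.add hint') hpt
    have hdouble : (∫ b in (-1 : ℝ)..1, (h b + h (-b))) =
        2 * ∫ b in (-1 : ℝ)..1, h b := by
      rw [intervalIntegral.integral_add hint hint', hsym]; ring
    have h2abs : (∫ b in (-1 : ℝ)..1, 2 * |b|) = 2 := by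
      rw [intervalIntegral.integral_const_mul, habs1]; norm_num
    rw [hGa]
    rw [hdouble, h2abs] at hmono
    linarith
  -- integrability of G on the outer interval
  have hGcont : Continuous (fun p : ℝ × ℝ =>
      -(|(-p.1) * z.1 + p.2 * z.2| / m) - (-|p.1| - |p.2|)) := by
    have c1 : Continuous fun p : ℝ × ℝ => (-p.1) * z.1 + p.2 * z.2 :=
      (continuous_fst.neg.mul continuous_const).add (continuous_snd.mul continuous_const)
    exact ((continuous_abs.comp c1).div_const m).neg.sub
      (continuous_fst.abs.neg.sub continuous_snd.abs)
  have hGmeas : StronglyMeasurable G :=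
    hGcont.stronglyMeasurable.integral_prod_right'
      (ν := volume.restrict (Set.Ioo (-1 : ℝ) 1))
  have hGint : IntegrableOn G (Set.Ioo (1 : ℝ) (1 + ρ)) := by
    apply Measure.integrableOn_of_bounded (M := 2 * (2 + (2 + ρ)))
    · rw [Real.volume_Ioo]; exact ENNReal.ofReal_ne_top
    · exact hGmeas.aestronglyMeasurable
    · filter_upwards [ae_restrict_mem measurableSet_Ioo] with a ha
      have ha1 : (1 : ℝ) ≤ a := le_of_lt ha.1
      have ha2 : a ≤ 1 + ρ := le_of_lt ha.2
      have hbd : ∀ᵐ b ∂(volume.restrict (Set.Ioo (-1:ℝ) 1)),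
          ‖-(|(-a) * z.1 + b * z.2| / m) - (-|a| - |b|)‖ ≤ 2 + (2 + ρ) := by
        filter_upwards [ae_restrict_mem measurableSet_Ioo] with b hbmem
        have hb1 : |b| ≤ 1 := abs_le.mpr ⟨le_of_lt hbmem.1, le_of_lt hbmem.2⟩
        have h1 : |(-a) * z.1 + b * z.2| / m ≤ |a| + |b| := by
          by_cases hm : m = 0
          · have h1 : z.1 = 0 := abs_eq_zero.mp (le_antisymm (hm ▸ hz1m) (abs_nonneg _))
            have h2 : z.2 = 0 := abs_eq_zero.mp (le_antisymm (hm ▸ hz2m) (abs_nonneg _))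
            simp [h1, h2, hm]
            positivity
          · have hmpos : 0 < m := lt_of_le_of_ne hm0 (Ne.symm hm)
            rw [div_le_iff₀ hmpos]
            calc |(-a) * z.1 + b * z.2| ≤ |(-a) * z.1| + |b * z.2| := abs_add_le _ _
              _ ≤ |a| * m + |b| * m := by
                  rw [abs_mul, abs_mul, abs_neg]
                  have := mul_le_mul_of_nonneg_left hz1m (abs_nonneg a)
                  have := mul_le_mul_of_nonneg_left hz2m (abs_nonneg b)
                  linarith
              _ ≤ (|a| + |b|) * m := by ring_nf; linarith
        have h0 : 0 ≤ |(-a) * z.1 + b * z.2| / m := by positivity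
        have haabs : |a| = a := abs_of_nonneg (by linarith)
        rw [Real.norm_eq_abs, abs_le]
        constructor
        · linarith
        · linarith
      calc ‖G a‖ ≤ (2 + (2 + ρ)) * (volume.restrict (Set.Ioo (-1 : ℝ) 1)
            Set.univ).toReal :=
          norm_integral_le_of_norm_le_const hbd
        _ ≤ 2 * (2 + (2 + ρ)) := by
            rw [Measure.restrict_apply_univ, Real.volume_Ioo]
            rw [ENNReal.toReal_ofReal (by norm_num)]
            nlinarith
  -- outer bound
  have houter : ρ ≤ ∫ a in Set.Ioo (1 : ℝ) (1 + ρ), G a := by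
    have h1 : (∫ _a in Set.Ioo (1 : ℝ) (1 + ρ), (1 : ℝ)) ≤
        ∫ a in Set.Ioo (1 : ℝ) (1 + ρ), G a :=
      setIntegral_mono_on ((integrableOn_const_iff).mpr
        (Or.inr (by rw [Real.volume_Ioo]; exact ENNReal.ofReal_lt_top)))
        hGint measurableSet_Ioo hinner
    have h2 : (∫ _a in Set.Ioo (1 : ℝ) (1 + ρ), (1 : ℝ)) = ρ := by
      rw [setIntegral_const, measureReal_def, Real.volume_Ioo, smul_eq_mul, mul_one,
        ENNReal.toReal_ofReal (by linarith)]
      ring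
    linarith [h2 ▸ h1]
  have hpos : (0 : ℝ) < 1 / (2 * ρ) := by positivity
  have := mul_le_mul_of_nonneg_left houter (le_of_lt hpos)
  have heq : 1 / (2 * ρ) * ρ = 1 / 2 := by field_simp
  rw [ge_iff_le, ← heq]
  exact this
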